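/- Let n ≥ 2 and let a_1 ≥ a_2 ≥ ⋯ ≥ a_n > 0 be real numbers. For t ∈ {2,…,n}, define U(t) = (t−1)/(∑_{j=1}^{t−1} 1/a_j + 1/∑_{j=t}^{n} a_j). If t is an integer with t > (n+1)/2 and 2 ≤ t ≤ n−1, then U(t) > U(t+1). Consequently, max over t ∈ {2,…,n} of U(t) is attained for some t ≤ ⌈n/2⌉ + 1. -/

import Mathlib

/-- `U(t) = (t-1)/(∑_{j=1}^{t-1} 1/a_j + 1/∑_{j=t}^{n} a_j)` (1-based indices: the
component `j : Fin n` has 1-based index `(j:ℕ)+1`). -/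
noncomputable def suffixPayoff (n : ℕ) (a : Fin n → ℝ) (t : ℕ) : ℝ :=
  ((t : ℝ) - 1) /
    (∑ j ∈ Finset.univ.filter (fun j : Fin n => (j : ℕ) + 1 < t), (a j)⁻¹
      + (∑ j ∈ Finset.univ.filter (fun j : Fin n => t ≤ (j : ℕ) + 1), a j)⁻¹)

lemma suffixPayoff_step (n : ℕ) (a : Fin n → ℝ)
    (ha : Antitone a) (hpos : ∀ i, 0 < a i)
    (t : ℕ) (ht2 : 2 ≤ t) (htn : t ≤ n - 1) (hhalf : ((n : ℝ) + 1) / 2 < (t : ℝ)) :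
    suffixPayoff n a (t + 1) < suffixPayoff n a t := by
  have htn' : t + 1 ≤ n := by omega
  have hi : t - 1 < n := by omega
  set i : Fin n := ⟨t - 1, hi⟩ with hidef
  set A : ℝ := ∑ j ∈ Finset.univ.filter (fun j : Fin n => (j : ℕ) + 1 < t), (a j)⁻¹ with hA
  set S : ℝ := ∑ j ∈ Finset.univ.filter (fun j : Fin n => t + 1 ≤ (j : ℕ) + 1), a j with hS
  -- rewrite the `t+1` sums and the `t` suffix sum
  have hFins : Finset.univ.filter (fun j : Fin n => (j : ℕ) + 1 < t + 1)
      = insert i (Finset.univ.filter (fun j : Fin n => (j : ℕ) + 1 < t)) := by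
    ext j
    simp only [Finset.mem_filter, Finset.mem_insert, Finset.mem_univ, true_and, Fin.ext_iff, hidef]
    omega
  have hGins : Finset.univ.filter (fun j : Fin n => t ≤ (j : ℕ) + 1)
      = insert i (Finset.univ.filter (fun j : Fin n => t + 1 ≤ (j : ℕ) + 1)) := by
    ext j
    simp only [Finset.mem_filter, Finset.mem_insert, Finset.mem_univ, true_and, Fin.ext_iff, hidef]
    omega
  have hinotF : i ∉ Finset.univ.filter (fun j : Fin n => (j : ℕ) + 1 < t) := by
    simp only [Finset.mem_filter, Finset.mem_univ, true_and, hidef]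
    omega
  have hinotG : i ∉ Finset.univ.filter (fun j : Fin n => t + 1 ≤ (j : ℕ) + 1) := by
    simp only [Finset.mem_filter, Finset.mem_univ, true_and, hidef]
    omega
  have hApos : 0 ≤ A := Finset.sum_nonneg fun j _ => (inv_nonneg).2 (hpos j).le
  have hSpos : 0 < S := by
    refine Finset.sum_pos (fun j _ => hpos j) ⟨⟨t, by omega⟩, ?_⟩
    simp
  have haipos : 0 < a i := hpos i
  -- bound on A
  have hAle : A ≤ ((t : ℝ) - 1) * (a i)⁻¹ := by
    have hcard : (Finset.univ.filter (fun j : Fin n => (j : ℕ) + 1 < t)).card ≤ t - 1 := by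
      have := Finset.card_le_card_of_injOn
        (s := Finset.univ.filter (fun j : Fin n => (j : ℕ) + 1 < t))
        (t := Finset.range (t - 1)) (fun j : Fin n => (j : ℕ))
        (by intro j hj; simp only [Finset.coe_filter, Finset.mem_univ, true_and, Set.mem_setOf_eq] at hj; simp only [Finset.coe_range, Set.mem_Iio]; omega)
        (by intro x _ y _ h; exact Fin.ext h)
      simpa using this
    calc A ≤ (Finset.univ.filter (fun j : Fin n => (j : ℕ) + 1 < t)).card • (a i)⁻¹ := by
            refine Finset.sum_le_card_nsmul _ _ _ fun j hj => ?_
            simp only [Finset.mem_filter, Finset.mem_univ, true_and] at hj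
            have hji : j ≤ i := by
              rw [Fin.le_def]; simp only [hidef]; omega
            exact inv_anti₀ (hpos i) (ha hji)
      _ ≤ ((t : ℝ) - 1) * (a i)⁻¹ := by
            rw [nsmul_eq_mul]
            refine mul_le_mul_of_nonneg_right ?_ (inv_nonneg.2 haipos.le)
            have : ((Finset.univ.filter (fun j : Fin n => (j : ℕ) + 1 < t)).card : ℝ)
                ≤ ((t - 1 : ℕ) : ℝ) := Nat.cast_le.2 hcard
            have h' : ((t - 1 : ℕ) : ℝ) = (t : ℝ) - 1 := by
              push_cast [Nat.cast_sub (by omega : 1 ≤ t)]; ring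
            linarith [this, h'.le]
  -- bound on S
  have hSle : S ≤ ((n : ℝ) - (t : ℝ)) * a i := by
    have hcard : (Finset.univ.filter (fun j : Fin n => t + 1 ≤ (j : ℕ) + 1)).card ≤ n - t := by
      have := Finset.card_le_card_of_injOn
        (s := Finset.univ.filter (fun j : Fin n => t + 1 ≤ (j : ℕ) + 1))
        (t := Finset.range (n - t)) (fun j : Fin n => (j : ℕ) - t)
        (by intro j hj; simp only [Finset.coe_filter, Finset.mem_univ, true_and, Set.mem_setOf_eq] at hj; simp only [Finset.coe_range, Set.mem_Iio]
            have := j.isLt; omega)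
        (by intro x hx y hy h
            simp only [Finset.coe_filter, Set.mem_setOf_eq, Finset.mem_univ, true_and] at hx hy
            simp only at h
            exact Fin.ext (by omega))
      simpa using this
    calc S ≤ (Finset.univ.filter (fun j : Fin n => t + 1 ≤ (j : ℕ) + 1)).card • a i := by
            refine Finset.sum_le_card_nsmul _ _ _ fun j hj => ?_
            simp only [Finset.mem_filter, Finset.mem_univ, true_and] at hj
            have hij : i ≤ j := by
              rw [Fin.le_def]; simp only [hidef]; omega
            exact ha hij
      _ ≤ ((n : ℝ) - (t : ℝ)) * a i := by
            rw [nsmul_eq_mul]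
            refine mul_le_mul_of_nonneg_right ?_ haipos.le
            have : ((Finset.univ.filter (fun j : Fin n => t + 1 ≤ (j : ℕ) + 1)).card : ℝ)
                ≤ ((n - t : ℕ) : ℝ) := Nat.cast_le.2 hcard
            have h' : ((n - t : ℕ) : ℝ) = (n : ℝ) - (t : ℝ) := by
              push_cast [Nat.cast_sub (by omega : t ≤ n)]; ring
            linarith [this, h'.le]
  have hSfullpos : 0 < a i + S := by positivity
  -- unfold and rewrite
  rw [suffixPayoff, suffixPayoff, hFins, hGins, Finset.sum_insert hinotF, Finset.sum_insert hinotG,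
    ← hA, ← hS]
  have ht2r : (2 : ℝ) ≤ (t : ℝ) := by exact_mod_cast ht2
  have hD1pos : 0 < (a i)⁻¹ + A + S⁻¹ := by positivity
  have hD2pos : 0 < A + (a i + S)⁻¹ := by positivity
  rw [div_lt_div_iff₀ hD1pos hD2pos]
  -- key inequality
  have hkey : (t : ℝ) * (a i + S)⁻¹ < ((t : ℝ) - 1) * S⁻¹ := by
    rw [inv_eq_one_div, inv_eq_one_div, mul_one_div, mul_one_div,
      div_lt_div_iff₀ hSfullpos hSpos]
    have h1 : S < ((t : ℝ) - 1) * a i := by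
      have : (n : ℝ) - (t : ℝ) < (t : ℝ) - 1 := by linarith
      calc S ≤ ((n : ℝ) - (t : ℝ)) * a i := hSle
        _ < ((t : ℝ) - 1) * a i := by
            exact mul_lt_mul_of_pos_right this haipos
    nlinarith [hSpos, h1]
  push_cast
  nlinarith [hkey, hAle, hApos, ht2r]

/-- Theorem 11: if `t > (n+1)/2` (and `2 ≤ t ≤ n-1`) then `U(t) > U(t+1)`; consequently
the maximum of `U(t)` over `t ∈ {2, …, n}` is attained at some `t ≤ ⌈n/2⌉ + 1`. -/
theorem suffixPayoff_max_in_first_half (n : ℕ) (hn : 2 ≤ n) (a : Fin n → ℝ)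
    (ha : Antitone a) (hpos : ∀ i, 0 < a i) :
    (∀ t : ℕ, 2 ≤ t → t ≤ n - 1 → ((n : ℝ) + 1) / 2 < (t : ℝ) →
      suffixPayoff n a (t + 1) < suffixPayoff n a t) ∧
    (∃ t₀ : ℕ, 2 ≤ t₀ ∧ t₀ ≤ (n + 1) / 2 + 1 ∧ t₀ ≤ n ∧
      ∀ t : ℕ, 2 ≤ t → t ≤ n → suffixPayoff n a t ≤ suffixPayoff n a t₀) := by
  refine ⟨fun t ht2 htn hhalf => suffixPayoff_step n a ha hpos t ht2 htn hhalf, ?_⟩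
  set m : ℕ := (n + 1) / 2 + 1 with hm
  have hm2 : 2 ≤ m := by omega
  have hmn : m ≤ n := by omega
  -- decreasing past m
  have hdec : ∀ t : ℕ, m ≤ t → t ≤ n → suffixPayoff n a t ≤ suffixPayoff n a m := by
    intro t hmt
    induction t, hmt using Nat.le_induction with
    | base => intro _; exact le_refl _
    | succ t hmt ih =>
      intro htn
      have hhalf : ((n : ℝ) + 1) / 2 < (t : ℝ) := by
        have h2t : n + 2 ≤ 2 * t := by omega
        have : ((n : ℝ)) + 2 ≤ 2 * (t : ℝ) := by exact_mod_cast h2t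
        linarith
      have hstep := suffixPayoff_step n a ha hpos t (by omega) (by omega) hhalf
      exact le_trans hstep.le (ih (by omega))
  obtain ⟨t₀, ht₀mem, ht₀max⟩ :=
    Finset.exists_max_image (Finset.Icc 2 m) (suffixPayoff n a)
      ⟨2, Finset.mem_Icc.2 ⟨le_refl _, hm2⟩⟩
  rw [Finset.mem_Icc] at ht₀mem
  refine ⟨t₀, ht₀mem.1, ht₀mem.2, le_trans ht₀mem.2 hmn, fun t ht2 htn => ?_⟩
  by_cases hcase : t ≤ m
  · exact ht₀max t (Finset.mem_Icc.2 ⟨ht2, hcase⟩)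
  · exact le_trans (hdec t (by omega) htn)
      (ht₀max m (Finset.mem_Icc.2 ⟨hm2, le_refl _⟩))
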